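/- For all p, q ∈ ℂ, setting A = p + p·i + q·j + q·k ∈ ℍ_ℂ, one has the identity A·L·A^c = 2·((p² − q²)·i + 2pq·j + 𝕚(p² + q²)·k). (This expresses that the Weierstraß–Enneper/preimage representation Φ = w(p² − q², 2pq, 𝕚(p² + q²)) of polynomial minimal surfaces is covered by the quaternionic representation λ·A·L·A^c.) -/

import Mathlib

open Quaternion

/-- The complex quaternion `a + b i + c j + d k`. -/
noncomputable def mkQ (a b c d : ℂ) : Quaternion ℂ := ⟨a, b, c, d⟩

/-- The null quaternion `L = i + 𝕚 j ∈ ℍ_ℂ`. -/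
noncomputable def Lq : Quaternion ℂ := mkQ 0 1 Complex.I 0

/-- For `A = p + p i + q j + q k` one has
`A L A^c = 2((p² − q²) i + 2pq j + 𝕚(p² + q²) k)`. -/
theorem preimage_to_quaternionic (p q : ℂ) :
    mkQ p p q q * Lq * star (mkQ p p q q) =
      (2 : ℂ) • mkQ 0 (p ^ 2 - q ^ 2) (2 * p * q) (Complex.I * (p ^ 2 + q ^ 2)) := by
  ext <;> simp [Quaternion.re_mul, Quaternion.imI_mul, Quaternion.imJ_mul, Quaternion.imK_mul, Quaternion.re_star, Quaternion.imI_star, Quaternion.imJ_star, Quaternion.imK_star, Quaternion.re_smul, Quaternion.imI_smul, Quaternion.imJ_smul, Quaternion.imK_smul, Lq] <;> simp [mkQ, Quaternion.ext_iff, mul_comm, mul_left_comm] <;> ring
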